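/- Let h, b, L > 0 and H(t) = (t² + h²)^{-1/2}. Define F(t) = H(t) - H(t+b) - H(t+L) + H(t+b+L) for t > -b. Then for any ε ∈ (0,1]: if t ≥ h/√(2-ε), then F(t) > (1/4) ε b L · H(t+b+L)³. -/

import Mathlib

open Real
set_option maxHeartbeats 1000000

theorem stmt11 (h b L : ℝ) (hh : 0 < h) (hb : 0 < b) (hL : 0 < L)
    (H : ℝ → ℝ) (hH : ∀ t, H t = (t ^ 2 + h ^ 2) ^ (-(1/2) : ℝ))
    (ε : ℝ) (hε : 0 < ε) (hε1 : ε ≤ 1)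
    (t : ℝ) (ht : -b < t) (ht' : h / Real.sqrt (2 - ε) ≤ t) :
    (1/4) * ε * b * L * (H (t + b + L)) ^ 3 <
      H t - H (t + b) - H (t + L) + H (t + b + L) := by
  have hpos : ∀ x : ℝ, 0 < x ^ 2 + h ^ 2 := fun x => by positivity
  -- first derivative
  have d1 : ∀ x : ℝ, HasDerivAt (fun x => (x ^ 2 + h ^ 2) ^ (-(1/2) : ℝ))
      (-x * (x ^ 2 + h ^ 2) ^ (-(3/2) : ℝ)) x := by
    intro x
    have h0 : HasDerivAt (fun x : ℝ => x ^ 2 + h ^ 2) (2 * x) x := by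
      simpa using ((hasDerivAt_pow 2 x).add_const (h ^ 2))
    have h1 := h0.rpow_const (p := (-(1/2) : ℝ)) (Or.inl (hpos x).ne')
    convert h1 using 1
    rw [show ((-(1/2) : ℝ) - 1) = -(3/2) by norm_num]
    ring
  -- second derivative
  have d2 : ∀ x : ℝ, HasDerivAt (fun x => -x * (x ^ 2 + h ^ 2) ^ (-(3/2) : ℝ))
      ((2 * x ^ 2 - h ^ 2) * (x ^ 2 + h ^ 2) ^ (-(5/2) : ℝ)) x := by
    intro x
    have h0 : HasDerivAt (fun x : ℝ => x ^ 2 + h ^ 2) (2 * x) x := by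
      simpa using ((hasDerivAt_pow 2 x).add_const (h ^ 2))
    have hg := h0.rpow_const (p := (-(3/2) : ℝ)) (Or.inl (hpos x).ne')
    have h2 := ((hasDerivAt_id x).neg.mul hg)
    refine h2.congr_deriv ?_
    have key : (x ^ 2 + h ^ 2) ^ (-(3/2) : ℝ)
        = (x ^ 2 + h ^ 2) * (x ^ 2 + h ^ 2) ^ (-(5/2) : ℝ) := by
      rw [show (-(3/2) : ℝ) = 1 + -(5/2) by norm_num, Real.rpow_add (hpos x),
        Real.rpow_one]
    rw [show ((-(3/2) : ℝ) - 1) = -(5/2) by norm_num, key]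
    simp only [Pi.neg_apply, id_eq]
    ring
  have cf : Continuous (fun x : ℝ => (x ^ 2 + h ^ 2) ^ (-(1/2) : ℝ)) :=
    Differentiable.continuous fun x => (d1 x).differentiableAt
  have cf1 : Continuous (fun x : ℝ => -x * (x ^ 2 + h ^ 2) ^ (-(3/2) : ℝ)) :=
    Differentiable.continuous fun x => (d2 x).differentiableAt
  -- MVT 1
  obtain ⟨ξ, hξ, hξeq⟩ := exists_hasDerivAt_eq_slope
    (fun τ => (τ ^ 2 + h ^ 2) ^ (-(1/2) : ℝ) - ((τ + L) ^ 2 + h ^ 2) ^ (-(1/2) : ℝ))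
    (fun τ => -τ * (τ ^ 2 + h ^ 2) ^ (-(3/2) : ℝ)
      - (-(τ + L) * ((τ + L) ^ 2 + h ^ 2) ^ (-(3/2) : ℝ)))
    (show t < t + b by linarith)
    (Continuous.continuousOn (cf.sub (cf.comp (continuous_id.add continuous_const))))
    (by
      intro x _
      have hc : HasDerivAt (fun τ : ℝ => ((τ + L) ^ 2 + h ^ 2) ^ (-(1/2) : ℝ))
          (-(x + L) * ((x + L) ^ 2 + h ^ 2) ^ (-(3/2) : ℝ)) x := by
        have := HasDerivAt.comp x (d1 (x + L)) ((hasDerivAt_id x).add_const L)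
        exact (d1 (x + L)).comp_add_const x L
      exact (d1 x).sub hc)
  -- MVT 2
  obtain ⟨η, hη, hηeq⟩ := exists_hasDerivAt_eq_slope
    (fun x => -x * (x ^ 2 + h ^ 2) ^ (-(3/2) : ℝ))
    (fun x => (2 * x ^ 2 - h ^ 2) * (x ^ 2 + h ^ 2) ^ (-(5/2) : ℝ))
    (show ξ < ξ + L by linarith)
    cf1.continuousOn
    (fun x _ => d2 x)
  obtain ⟨hξ1, hξ2⟩ := hξ
  obtain ⟨hη1, hη2⟩ := hη
  rw [eq_div_iff (by linarith : t + b - t ≠ 0)] at hξeq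
  rw [eq_div_iff (by linarith : ξ + L - ξ ≠ 0)] at hηeq
  simp only [hH]
  set T := t + b + L with hTdef
  have ht0 : 0 < t :=
    lt_of_lt_of_le (div_pos hh (Real.sqrt_pos.mpr (by linarith))) ht'
  have hη0 : 0 < η := by linarith
  have hηT : η < T := by linarith
  have key : (t ^ 2 + h ^ 2) ^ (-(1/2) : ℝ) - ((t + b) ^ 2 + h ^ 2) ^ (-(1/2) : ℝ)
      - ((t + L) ^ 2 + h ^ 2) ^ (-(1/2) : ℝ) + (T ^ 2 + h ^ 2) ^ (-(1/2) : ℝ)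
      = b * L * ((2 * η ^ 2 - h ^ 2) * (η ^ 2 + h ^ 2) ^ (-(5/2) : ℝ)) := by
    have e : (T : ℝ) = t + b + L := rfl
    rw [e, show t + b + L = (t + b) + L by ring]
    linear_combination hξeq - b * hηeq
  rw [key]
  -- now the estimate
  have hcube : ((T ^ 2 + h ^ 2) ^ (-(1/2) : ℝ)) ^ 3 = (T ^ 2 + h ^ 2) ^ (-(3/2) : ℝ) := by
    rw [← Real.rpow_natCast ((T ^ 2 + h ^ 2) ^ (-(1/2) : ℝ)) 3,
      ← Real.rpow_mul (hpos T).le]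
    norm_num
  rw [hcube]
  have h2ε : (0:ℝ) < 2 - ε := by linarith
  have hth : h ^ 2 ≤ (2 - ε) * t ^ 2 := by
    have hs : Real.sqrt (2 - ε) > 0 := Real.sqrt_pos.mpr h2ε
    have h1 : h ≤ t * Real.sqrt (2 - ε) := by
      rw [div_le_iff₀ hs] at ht'
      linarith
    have h2 : h ^ 2 ≤ (t * Real.sqrt (2 - ε)) ^ 2 := by nlinarith
    calc h ^ 2 ≤ (t * Real.sqrt (2 - ε)) ^ 2 := h2
      _ = (2 - ε) * t ^ 2 := by
          rw [mul_pow, Real.sq_sqrt h2ε.le]; ring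
  clear hξeq hηeq d1 d2 cf cf1 hH key
  have htη : t ^ 2 ≤ η ^ 2 := pow_le_pow_left₀ ht0.le (by linarith : t ≤ η) 2
  have hhη : h ^ 2 ≤ (2 - ε) * η ^ 2 :=
    le_trans hth (mul_le_mul_of_nonneg_left htη (by linarith))
  have hnum : ε / 3 * (η ^ 2 + h ^ 2) ≤ 2 * η ^ 2 - h ^ 2 := by
    nlinarith [hhη, sq_nonneg (ε * η), mul_nonneg hε.le (sq_nonneg η)]
  have hA5 : (0:ℝ) < (η ^ 2 + h ^ 2) ^ (-(5/2) : ℝ) := Real.rpow_pos_of_pos (hpos η) _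
  have step1 : ε / 3 * (η ^ 2 + h ^ 2) * (η ^ 2 + h ^ 2) ^ (-(5/2) : ℝ)
      ≤ (2 * η ^ 2 - h ^ 2) * (η ^ 2 + h ^ 2) ^ (-(5/2) : ℝ) :=
    mul_le_mul_of_nonneg_right hnum hA5.le
  have step2 : ε / 3 * (η ^ 2 + h ^ 2) * (η ^ 2 + h ^ 2) ^ (-(5/2) : ℝ)
      = ε / 3 * (η ^ 2 + h ^ 2) ^ (-(3/2) : ℝ) := by
    rw [show (-(3/2) : ℝ) = 1 + -(5/2) by norm_num, Real.rpow_add (hpos η),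
      Real.rpow_one]
    ring
  have hAB : η ^ 2 + h ^ 2 ≤ T ^ 2 + h ^ 2 := by
    have := pow_le_pow_left₀ hη0.le hηT.le 2
    linarith
  have step3 : (T ^ 2 + h ^ 2) ^ (-(3/2) : ℝ) ≤ (η ^ 2 + h ^ 2) ^ (-(3/2) : ℝ) :=
    Real.rpow_le_rpow_of_nonpos (hpos η) hAB (by norm_num)
  have hB3 : (0:ℝ) < (T ^ 2 + h ^ 2) ^ (-(3/2) : ℝ) := Real.rpow_pos_of_pos (hpos T) _
  have final : ε / 4 * (T ^ 2 + h ^ 2) ^ (-(3/2) : ℝ)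
      < (2 * η ^ 2 - h ^ 2) * (η ^ 2 + h ^ 2) ^ (-(5/2) : ℝ) := by
    have : ε / 4 * (T ^ 2 + h ^ 2) ^ (-(3/2) : ℝ)
        < ε / 3 * (T ^ 2 + h ^ 2) ^ (-(3/2) : ℝ) :=
      mul_lt_mul_of_pos_right (show ε / 4 < ε / 3 by linarith) hB3
    calc ε / 4 * (T ^ 2 + h ^ 2) ^ (-(3/2) : ℝ)
        < ε / 3 * (T ^ 2 + h ^ 2) ^ (-(3/2) : ℝ) := this
      _ ≤ ε / 3 * (η ^ 2 + h ^ 2) ^ (-(3/2) : ℝ) :=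
          mul_le_mul_of_nonneg_left step3 (show (0:ℝ) ≤ ε / 3 by linarith)
      _ = ε / 3 * (η ^ 2 + h ^ 2) * (η ^ 2 + h ^ 2) ^ (-(5/2) : ℝ) := step2.symm
      _ ≤ _ := step1
  calc (1/4) * ε * b * L * (T ^ 2 + h ^ 2) ^ (-(3/2) : ℝ)
      = b * L * (ε / 4 * (T ^ 2 + h ^ 2) ^ (-(3/2) : ℝ)) := by ring
    _ < b * L * ((2 * η ^ 2 - h ^ 2) * (η ^ 2 + h ^ 2) ^ (-(5/2) : ℝ)) := by
        exact mul_lt_mul_of_pos_left final (show (0:ℝ) < b * L by positivity)
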